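/- Let L ∈ ℕ, let Σ ∈ ℝ^{L × L} be symmetric positive semidefinite, and let ρ, χ ∈ ℝ^L be such that Σ + ρρᵀ is positive definite. Define MSE(ω) := ωᵀ Σ ω + (ρᵀ(ω − χ))² for ω ∈ ℝ^L. Then the unique minimizer of MSE over ℝ^L is ω* = (ρᵀχ) · (Σ + ρρᵀ)^{−1} ρ, and the minimal value is MSE(ω*) = (ρᵀχ)² · (1 − ρᵀ (Σ + ρρᵀ)^{−1} ρ). -/

import Mathlib

open Matrix

noncomputable def MSEfn {L : ℕ} (S : Matrix (Fin L) (Fin L) ℝ) (ρ χ : Fin L → ℝ)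
    (ω : Fin L → ℝ) : ℝ :=
  ω ⬝ᵥ (S *ᵥ ω) + (ρ ⬝ᵥ (ω - χ)) ^ 2

noncomputable def omegaStar {L : ℕ} (S : Matrix (Fin L) (Fin L) ℝ) (ρ χ : Fin L → ℝ) :
    Fin L → ℝ :=
  (ρ ⬝ᵥ χ) • ((S + Matrix.vecMulVec ρ ρ)⁻¹ *ᵥ ρ)

lemma vecMulVec_mulVec_aux {L : ℕ} (u v x : Fin L → ℝ) :
    Matrix.vecMulVec u v *ᵥ x = (v ⬝ᵥ x) • u := by
  funext i
  simp [Matrix.vecMulVec, Matrix.mulVec, dotProduct, Finset.mul_sum, mul_comm,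
    mul_assoc, mul_left_comm]

theorem stmt_18 (L : ℕ) (S : Matrix (Fin L) (Fin L) ℝ) (hS : S.PosSemidef)
    (ρ χ : Fin L → ℝ) (hpd : (S + Matrix.vecMulVec ρ ρ).PosDef) :
    (∀ ω : Fin L → ℝ, ω ≠ omegaStar S ρ χ → MSEfn S ρ χ (omegaStar S ρ χ) < MSEfn S ρ χ ω) ∧
    MSEfn S ρ χ (omegaStar S ρ χ) =
      (ρ ⬝ᵥ χ) ^ 2 * (1 - ρ ⬝ᵥ ((S + Matrix.vecMulVec ρ ρ)⁻¹ *ᵥ ρ)) := by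
  set A := S + Matrix.vecMulVec ρ ρ with hA
  set c := ρ ⬝ᵥ χ with hc
  set d := A⁻¹ *ᵥ ρ with hd
  set w := omegaStar S ρ χ with hw
  have hwdef : w = c • d := rfl
  have hAT : Aᵀ = A := by
    have := hpd.isHermitian
    exact (Matrix.conjTranspose_eq_transpose_of_trivial A).symm.trans this
  have hAd : A *ᵥ d = ρ := by
    rw [hd, Matrix.mulVec_mulVec, Matrix.mul_nonsing_inv A (isUnit_iff_ne_zero.mpr hpd.det_pos.ne'), Matrix.one_mulVec]
  have hsym : ∀ u v : Fin L → ℝ, u ⬝ᵥ (A *ᵥ v) = v ⬝ᵥ (A *ᵥ u) := by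
    intro u v
    rw [Matrix.dotProduct_mulVec, ← Matrix.mulVec_transpose, hAT, dotProduct_comm]
  have hAw : A *ᵥ w = c • ρ := by rw [hwdef, Matrix.mulVec_smul, hAd]
  -- expansion of MSE
  have expand : ∀ ω : Fin L → ℝ,
      MSEfn S ρ χ ω = ω ⬝ᵥ (A *ᵥ ω) - 2 * c * (ρ ⬝ᵥ ω) + c ^ 2 := by
    intro ω
    have h1 : ω ⬝ᵥ (A *ᵥ ω) = ω ⬝ᵥ (S *ᵥ ω) + (ρ ⬝ᵥ ω) * (ρ ⬝ᵥ ω) := by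
      rw [hA, Matrix.add_mulVec, dotProduct_add, vecMulVec_mulVec_aux,
        dotProduct_smul, dotProduct_comm, smul_eq_mul, dotProduct_comm ω ρ]
    simp only [MSEfn, dotProduct_sub, ← hc]
    rw [h1]; ring
  have key : ∀ ω : Fin L → ℝ,
      MSEfn S ρ χ ω = (ω - w) ⬝ᵥ (A *ᵥ (ω - w)) + c ^ 2 * (1 - ρ ⬝ᵥ d) := by
    intro ω
    have h2 : (ω - w) ⬝ᵥ (A *ᵥ (ω - w))
        = ω ⬝ᵥ (A *ᵥ ω) - 2 * (ω ⬝ᵥ (A *ᵥ w)) + w ⬝ᵥ (A *ᵥ w) := by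
      rw [Matrix.mulVec_sub, dotProduct_sub, sub_dotProduct,
        sub_dotProduct, hsym w ω]
      ring
    have h3 : ω ⬝ᵥ (A *ᵥ w) = c * (ρ ⬝ᵥ ω) := by
      rw [hAw, dotProduct_smul, smul_eq_mul, dotProduct_comm]
    have h4 : w ⬝ᵥ (A *ᵥ w) = c ^ 2 * (ρ ⬝ᵥ d) := by
      rw [hAw, hwdef, dotProduct_smul, smul_dotProduct,
        dotProduct_comm]
      simp [smul_eq_mul]; ring
    rw [expand ω, h2, h3, h4]; ring
  have hmin : MSEfn S ρ χ w = c ^ 2 * (1 - ρ ⬝ᵥ d) := by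
    rw [key w]
    simp
  refine ⟨fun ω hω => ?_, hmin⟩
  have hne : ω - w ≠ 0 := sub_ne_zero.mpr hω
  have hpos := hpd.dotProduct_mulVec_pos hne
  rw [key ω, hmin]
  simpa using hpos
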